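/- Let (m,n) be a coprime pair of positive integers and let R ≠ R_0 = {0,1,…,m+n−1} be the rank set of an (m,n)-Dyck path. Then ℒ(R) = 𝔠(ℛ(𝔠(R))), and consequently area(𝔠(ℒ(R))) = area(𝔠(R)) − 1, where a rank set is identified with its (m,n)-Dyck path for the purpose of taking area. -/

import Mathlib

/-- The list of ranks of the lattice points visited by a path (excluding the final
point), starting from rank `r`.  A `true` entry is a north (`u`) step, which adds `m`
to the rank; a `false` entry is an east (`d`) step, which subtracts `n`. -/
def rankWalk (m n : ℤ) : List Bool → ℤ → List ℤ
  | [], _ => []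
  | b :: bs, r => r :: rankWalk m n bs (r + if b then m else -n)

/-- An `(m,n)`-path: a word of `n` north steps (`true`) and `m` east steps (`false`). -/
def IsPathWord (m n : ℕ) (P : List Bool) : Prop :=
  P.length = m + n ∧ P.count true = n

/-- An `(m,n)`-Dyck path: an `(m,n)`-path all of whose ranks are nonnegative. -/
def IsDyckWord (m n : ℕ) (P : List Bool) : Prop :=
  IsPathWord m n P ∧ ∀ r ∈ rankWalk (m : ℤ) (n : ℤ) P 0, 0 ≤ r

/-- The rank set of a path: the ranks of its `m+n` lattice points other than the endpoint. -/
def rankSet (m n : ℕ) (P : List Bool) : Finset ℤ :=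
  (rankWalk (m : ℤ) (n : ℤ) P 0).toFinset

/-- `R` is the rank set of some `(m,n)`-path. -/
def IsRankSet (m n : ℕ) (R : Finset ℤ) : Prop :=
  ∃ P : List Bool, IsPathWord m n P ∧ rankSet m n P = R

/-- `R` is the rank set of some `(m,n)`-Dyck path. -/
def IsDyckRankSet (m n : ℕ) (R : Finset ℤ) : Prop :=
  ∃ P : List Bool, IsDyckWord m n P ∧ rankSet m n P = R

/-- The rank complement `𝔠(R) = (max R) - R`. -/
def rankCompl (R : Finset ℤ) : Finset ℤ :=
  R.image (fun r => WithBot.unbotD 0 R.max - r)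

/-- The rank set `R₀ = {0, 1, …, m+n-1}` of the unique Dyck path of area `0`. -/
def baseRankSet (m n : ℕ) : Finset ℤ :=
  (Finset.range (m + n)).image (fun i : ℕ => (i : ℤ))

/-- The left operation `ℒ(R) = ((R \ {0}) ∪ {m+n}) - min (R \ {0})`. -/
def leftOp (m n : ℕ) (R : Finset ℤ) : Finset ℤ :=
  ((R.erase 0) ∪ {((m : ℤ) + n)}).image
    (fun r => r - WithTop.untopD 0 (R.erase 0).min)

/-- The right operation `ℛ(R) = (R \ {max R}) ∪ {max R - m - n}`. -/
def rightOp (m n : ℕ) (R : Finset ℤ) : Finset ℤ :=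
  (R.erase (WithBot.unbotD 0 R.max)) ∪ {WithBot.unbotD 0 R.max - m - n}

/-- The lattice point of the path `P` reached after `i` steps. -/
def pathPt (P : List Bool) : ℕ → ℤ × ℤ
  | 0 => (0, 0)
  | i + 1 => pathPt P i + (if P.getD i false then (0, 1) else (1, 0))

/- `area P` is the number of unit lattice squares lying to the right of the path `P`
and to the left of the diagonal `y = (n/m)x`: the square with lower-left corner
`(x, y)` is to the left of the diagonal iff its lower-right corner is weakly above
the diagonal, i.e. `n(x+1) ≤ my`, and it is to the right of the path iff the north
step of the path at height `y` starts at a point with first coordinate `≤ x`. -/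
open Classical in

noncomputable def area (m n : ℕ) (P : List Bool) : ℕ :=
  ((Finset.range m ×ˢ Finset.range n).filter (fun q =>
      (n : ℤ) * (q.1 + 1) ≤ (m : ℤ) * q.2 ∧
      ∃ i < P.length, P.getD i false = true ∧
        (pathPt P i).2 = (q.2 : ℤ) ∧ (pathPt P i).1 ≤ (q.1 : ℤ))).card

def walkEnd (m n : ℤ) : List Bool → ℤ → ℤ
  | [], r => r
  | b :: bs, r => walkEnd m n bs (r + if b then m else -n)

lemma rankWalk_append (m n : ℤ) (A B : List Bool) (r : ℤ) :
    rankWalk m n (A ++ B) r = rankWalk m n A r ++ rankWalk m n B (walkEnd m n A r) := by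
  induction A generalizing r <;> simp [rankWalk, walkEnd, *]

lemma walkEnd_append (m n : ℤ) (A B : List Bool) (r : ℤ) :
    walkEnd m n (A ++ B) r = walkEnd m n B (walkEnd m n A r) := by
  induction A generalizing r <;> simp [walkEnd, *]

lemma walkEnd_eq (m n : ℤ) (A : List Bool) (r : ℤ) :
    walkEnd m n A r = r + m * A.count true - n * A.count false := by
  induction A generalizing r with
  | nil => simp [walkEnd]
  | cons b A ih => cases b <;> simp [walkEnd, ih, List.count_cons] <;> push_cast <;> ring

lemma count_true_add_count_false (l : List Bool) : l.count true + l.count false = l.length := by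
  induction l with
  | nil => simp
  | cons b l ih => cases b <;> simp [List.count_cons] <;> omega

lemma length_rankWalk (m n : ℤ) (P : List Bool) (r : ℤ) :
    (rankWalk m n P r).length = P.length := by
  induction P generalizing r <;> simp [rankWalk, *]

lemma rankWalk_eq_map (m n : ℤ) (P : List Bool) (r : ℤ) :
    rankWalk m n P r = (List.range P.length).map (fun i => walkEnd m n (P.take i) r) := by
  induction P generalizing r with
  | nil => simp [rankWalk]
  | cons b P ih =>
    rw [List.length_cons, List.range_succ_eq_map]
    simp only [rankWalk, List.map_cons, List.map_map]
    refine congrArg₂ _ rfl ?_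
    rw [ih (r + if b then m else -n)]
    refine List.map_congr_left fun i _ => ?_
    simp [Function.comp, walkEnd, List.take_succ_cons]

lemma coprime_int (m n : ℕ) (h : Nat.Coprime m n) : IsCoprime (m:ℤ) (m+n) := by
  have h2 : Nat.Coprime m (m + n) := by rw [add_comm]; exact Nat.coprime_add_self_right.mpr h
  have := Nat.isCoprime_iff_coprime.mpr h2
  exact_mod_cast this

-- key injectivity on residues

lemma resid_inj (m n : ℕ) (hcop : Nat.Coprime m n) {i j : ℕ} (hi : i < m + n) (hj : j < m + n)
    {c c' : ℤ} (h : (m:ℤ) * i - (m+n) * c = (m:ℤ) * j - (m+n) * c') : i = j := by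
  have hdvd : ((m:ℤ) + n) ∣ (m:ℤ) * ((i:ℤ) - j) := ⟨c - c', by ring_nf; linarith⟩
  have hco := coprime_int m n hcop
  have hdvd2 : ((m:ℤ) + n) ∣ ((i:ℤ) - j) := by
    have := (IsCoprime.dvd_of_dvd_mul_left (show IsCoprime ((m:ℤ)+n) (m:ℤ) from hco.symm) hdvd)
    exact this
  have : |(i:ℤ) - j| < (m:ℤ) + n := by
    rw [abs_sub_lt_iff]; constructor <;> push_cast <;> omega
  have := Int.eq_zero_of_abs_lt_dvd hdvd2 this
  omega

lemma walkEnd_take (m n : ℕ) (P : List Bool) (i : ℕ) (hi : i ≤ P.length) :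
    walkEnd (m:ℤ) n (P.take i) 0 = (m:ℤ) * i - ((m:ℤ)+n) * ((P.take i).count false) := by
  rw [walkEnd_eq]
  have h := count_true_add_count_false (P.take i)
  rw [List.length_take] at h
  have : (min i P.length) = i := by omega
  rw [this] at h
  have : ((P.take i).count true : ℤ) = (i:ℤ) - ((P.take i).count false) := by
    omega
  rw [this]; ring

lemma mem_rankSet_iff (m n : ℕ) (P : List Bool) (x : ℤ) :
    x ∈ rankSet m n P ↔ ∃ i < P.length, walkEnd (m:ℤ) n (P.take i) 0 = x := by
  rw [rankSet, List.mem_toFinset, rankWalk_eq_map]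
  simp [eq_comm]

lemma elem_inj (m n : ℕ) (hcop : Nat.Coprime m n) (P Q : List Bool)
    (hP : P.length = m + n) (hQ : Q.length = m + n) {i j : ℕ} (hi : i < m + n) (hj : j < m + n)
    (h : walkEnd (m:ℤ) n (P.take i) 0 = walkEnd (m:ℤ) n (Q.take j) 0) : i = j := by
  rw [walkEnd_take m n P i (by omega), walkEnd_take m n Q j (by omega)] at h
  exact resid_inj m n hcop hi hj h

lemma nodup_rankWalk (m n : ℕ) (hcop : Nat.Coprime m n) (P : List Bool)
    (hP : P.length = m + n) : (rankWalk (m:ℤ) n P 0).Nodup := by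
  rw [rankWalk_eq_map]
  refine List.Nodup.map_on ?_ List.nodup_range
  intro i hi j hj h
  rw [List.mem_range] at hi hj
  exact elem_inj m n hcop P P hP hP (by omega) (by omega) h

lemma card_rankSet (m n : ℕ) (hcop : Nat.Coprime m n) (P : List Bool)
    (hP : P.length = m + n) : (rankSet m n P).card = m + n := by
  rw [rankSet, List.toFinset_card_of_nodup (nodup_rankWalk m n hcop P hP),
    length_rankWalk, hP]

lemma walkEnd_full (m n : ℕ) (P : List Bool) (hP : IsPathWord m n P) :
    walkEnd (m:ℤ) n P 0 = 0 := by
  obtain ⟨hl, hc⟩ := hP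
  have h := count_true_add_count_false P
  rw [walkEnd_eq, hc]
  have : (P.count false : ℤ) = m := by omega
  rw [this]; ring

lemma word_eq_of_rankSet_eq (m n : ℕ) (hcop : Nat.Coprime m n) (P Q : List Bool)
    (hP : IsPathWord m n P) (hQ : IsPathWord m n Q) (h : rankSet m n P = rankSet m n Q) :
    P = Q := by
  have hPl := hP.1; have hQl := hQ.1
  -- all partial walkEnds agree
  have key : ∀ i ≤ m + n, walkEnd (m:ℤ) n (P.take i) 0 = walkEnd (m:ℤ) n (Q.take i) 0 := by
    intro i hile
    rcases Nat.lt_or_ge i (m+n) with hilt | hige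
    · have : walkEnd (m:ℤ) n (P.take i) 0 ∈ rankSet m n Q := by
        rw [← h, mem_rankSet_iff]; exact ⟨i, by omega, rfl⟩
      rw [mem_rankSet_iff] at this
      obtain ⟨j, hj, hje⟩ := this
      have : j = i := elem_inj m n hcop Q P hQl hPl (by omega) hilt hje
      rw [← hje, this]
    · have : i = m + n := by omega
      subst this
      rw [← hPl, List.take_length, ← hQl] at *
      rw [List.take_length, walkEnd_full m n P hP, walkEnd_full m n Q hQ]
  -- deduce letters agree
  refine List.ext_getElem (by omega) ?_
  intro i h1 h2
  have hiN : i < m + n := by omega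
  have e1 := key i (by omega)
  have e2 := key (i+1) (by omega)
  have tP : P.take (i+1) = P.take i ++ [P[i]] := by
    rw [List.take_succ, List.getElem?_eq_getElem h1]; rfl
  have tQ : Q.take (i+1) = Q.take i ++ [Q[i]] := by
    rw [List.take_succ, List.getElem?_eq_getElem h2]; rfl
  rw [tP, tQ, walkEnd_append, walkEnd_append] at e2
  simp only [walkEnd] at e2
  rw [e1] at e2
  rcases hb : P[i] <;> rcases hb' : Q[i] <;> rw [hb, hb'] at e2 <;> simp at e2 ⊢ <;> omega

lemma zero_mem_rankSet (m n : ℕ) (P : List Bool) (hP : 0 < P.length) :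
    (0:ℤ) ∈ rankSet m n P := by
  rw [mem_rankSet_iff]
  exact ⟨0, hP, by simp [walkEnd]⟩

lemma rankSet_nonneg (m n : ℕ) (P : List Bool) (hD : IsDyckWord m n P) :
    ∀ r ∈ rankSet m n P, 0 ≤ r := by
  intro r hr
  rw [rankSet, List.mem_toFinset] at hr
  exact hD.2 r hr

lemma m_mem_rankSet (m n : ℕ) (hm : 0 < m) (hn : 0 < n) (P : List Bool)
    (hD : IsDyckWord m n P) : (m:ℤ) ∈ rankSet m n P := by
  have hl := hD.1.1
  have h1 : 1 < P.length := by omega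
  have ht : P.take 1 = [P[0]] := by
    cases P with
    | nil => simp at h1
    | cons p rest => simp
  have hmem : walkEnd (m:ℤ) n (P.take 1) 0 ∈ rankSet m n P := by
    rw [mem_rankSet_iff]; exact ⟨1, h1, rfl⟩
  rcases hb : P[0] with _ | _
  · exfalso
    rw [ht, hb] at hmem
    simp only [walkEnd] at hmem
    have := rankSet_nonneg m n P hD _ hmem
    simp at this
    omega
  · rw [ht, hb] at hmem
    simpa [walkEnd] using hmem

lemma unbot'_max (R : Finset ℤ) (h : R.Nonempty) :
    WithBot.unbotD 0 R.max = R.max' h := by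
  rw [← Finset.coe_max' h, WithBot.unbotD_coe]

lemma untop'_min (R : Finset ℤ) (h : R.Nonempty) :
    WithTop.untopD 0 R.min = R.min' h := by
  rw [← Finset.coe_min' h, WithTop.untopD_coe]

lemma rankCompl_eq (R : Finset ℤ) (h : R.Nonempty) :
    rankCompl R = R.image (fun r => R.max' h - r) := by
  rw [rankCompl, unbot'_max R h]

lemma max'_rankCompl (R : Finset ℤ) (h0 : (0:ℤ) ∈ R) (hnonneg : ∀ r ∈ R, 0 ≤ r) :
    ∀ hS : (rankCompl R).Nonempty, (rankCompl R).max' hS = R.max' ⟨0, h0⟩ := by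
  intro hS
  set M := R.max' ⟨0, h0⟩ with hM
  apply le_antisymm
  · apply Finset.max'_le
    intro y hy
    rw [rankCompl_eq R ⟨0, h0⟩, Finset.mem_image] at hy
    obtain ⟨r, hr, rfl⟩ := hy
    have := hnonneg r hr
    have : r ≤ M := Finset.le_max' R r hr
    omega
  · apply Finset.le_max'
    rw [rankCompl_eq R ⟨0, h0⟩, Finset.mem_image]
    exact ⟨0, h0, by ring⟩

lemma rankCompl_rankCompl (R : Finset ℤ) (h0 : (0:ℤ) ∈ R) (hnonneg : ∀ r ∈ R, 0 ≤ r) :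
    rankCompl (rankCompl R) = R := by
  have hne : R.Nonempty := ⟨0, h0⟩
  set M := R.max' hne with hM
  have hSne : (rankCompl R).Nonempty := by
    rw [rankCompl_eq R hne]; exact hne.image _
  rw [rankCompl_eq _ hSne, max'_rankCompl R h0 hnonneg hSne, rankCompl_eq R hne,
    Finset.image_image]
  have : ∀ x ∈ R, ((fun r => M - r) ∘ (fun r => M - r)) x = id x := by
    intro x _; simp
  rw [Finset.image_congr fun x hx => this x hx, Finset.image_id]

lemma part1_sets (m n : ℕ) (hm : 0 < m) (hn : 0 < n) (R : Finset ℤ)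
    (h0 : (0:ℤ) ∈ R) (hnonneg : ∀ r ∈ R, 0 ≤ r) (hmmem : (m:ℤ) ∈ R) :
    leftOp m n R = rankCompl (rightOp m n (rankCompl R)) := by
  have hne : R.Nonempty := ⟨0, h0⟩
  set M := R.max' hne with hM
  have hEne : (R.erase 0).Nonempty := ⟨(m:ℤ), Finset.mem_erase.mpr ⟨by positivity, hmmem⟩⟩
  set μ := (R.erase 0).min' hEne with hμ
  have hμm : μ ≤ (m:ℤ) := Finset.min'_le _ _ (Finset.mem_erase.mpr ⟨by positivity, hmmem⟩)
  -- compute rankCompl R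
  have hS : rankCompl R = R.image (fun r => M - r) := rankCompl_eq R hne
  have hSne : (rankCompl R).Nonempty := by rw [hS]; exact hne.image _
  have hSmax : WithBot.unbotD 0 (rankCompl R).max = M :=
    (unbot'_max _ hSne).trans (max'_rankCompl R h0 hnonneg hSne)
  -- compute rightOp (rankCompl R)
  have herase : (rankCompl R).erase M = (R.erase 0).image (fun r => M - r) := by
    ext x
    rw [Finset.mem_erase, hS, Finset.mem_image]
    simp only [Finset.mem_image, Finset.mem_erase]
    constructor
    · rintro ⟨hxM, r, hr, rfl⟩
      exact ⟨r, ⟨fun h => hxM (by rw [h]; ring), hr⟩, rfl⟩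
    · rintro ⟨r, ⟨hr0, hr⟩, rfl⟩
      exact ⟨fun h => hr0 (by omega), r, hr, rfl⟩
  have hT : rightOp m n (rankCompl R) =
      (R.erase 0).image (fun r => M - r) ∪ {M - m - n} := by
    rw [rightOp, hSmax, herase]
  -- the max of rightOp (rankCompl R)
  have hTne : (rightOp m n (rankCompl R)).Nonempty := by
    rw [hT]; exact ⟨M - m - n, Finset.mem_union_right _ (Finset.mem_singleton_self _)⟩
  have hTmax : (rightOp m n (rankCompl R)).max' hTne = M - μ := by
    apply le_antisymm
    · apply Finset.max'_le
      intro y hy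
      rw [hT, Finset.mem_union, Finset.mem_image, Finset.mem_singleton] at hy
      rcases hy with ⟨r, hr, rfl⟩ | rfl
      · have := Finset.min'_le _ _ hr
        omega
      · push_cast; omega
    · apply Finset.le_max'
      rw [hT, Finset.mem_union, Finset.mem_image]
      exact Or.inl ⟨μ, Finset.min'_mem _ _, rfl⟩
  -- final computation
  rw [rankCompl_eq _ hTne, hTmax, hT, Finset.image_union, Finset.image_image,
    Finset.image_singleton, leftOp, untop'_min _ hEne, ← hμ, Finset.image_union,
    Finset.image_singleton]
  congr 1
  · apply Finset.image_congr
    intro x _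
    simp only [Function.comp]
    ring
  · congr 1
    ring

lemma pathPt_eq (P : List Bool) (i : ℕ) (hi : i ≤ P.length) :
    pathPt P i = (((P.take i).count false : ℤ), ((P.take i).count true : ℤ)) := by
  induction i with
  | zero => simp [pathPt]
  | succ i ih =>
    have hi' : i < P.length := by omega
    have ht : P.take (i+1) = P.take i ++ [P[i]] := by
      rw [List.take_succ, List.getElem?_eq_getElem hi']; rfl
    rw [pathPt, ih (by omega), List.getD_eq_getElem P false hi', ht]
    rcases hb : P[i] <;>
      simp [List.count_append, Prod.ext_iff] <;> push_cast <;> omega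

lemma ct_mono (W : List Bool) (b : Bool) {i j : ℕ} (h : i ≤ j) :
    (W.take i).count b ≤ (W.take j).count b := by
  have h1 : (W.take i) = (W.take j).take i := by rw [List.take_take, min_eq_left h]
  rw [h1]
  exact ((List.take_prefix i (W.take j)).sublist).count_le b

lemma take_succ_getElem (W : List Bool) (i : ℕ) (hi : i < W.length) :
    W.take (i+1) = W.take i ++ [W[i]] := by
  rw [List.take_succ, List.getElem?_eq_getElem hi]; rfl

lemma getD_true_iff (W : List Bool) (i : ℕ) (hi : i < W.length) :
    W.getD i false = true ↔ (W.take (i+1)).count true = (W.take i).count true + 1 := by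
  rw [List.getD_eq_getElem W false hi, take_succ_getElem W i hi, List.count_append]
  rcases hb : W[i] <;> simp

lemma NC_iff (W : List Bool) (x y : ℤ) :
    (∃ i < W.length, W.getD i false = true ∧
        (pathPt W i).2 = y ∧ (pathPt W i).1 ≤ x) ↔
    ∃ i < W.length, (W.take (i+1)).count true = (W.take i).count true + 1 ∧
        ((W.take i).count true : ℤ) = y ∧ ((W.take i).count false : ℤ) ≤ x := by
  constructor <;> rintro ⟨i, hi, h1, h2, h3⟩ <;> refine ⟨i, hi, ?_, ?_, ?_⟩
  · exact (getD_true_iff W i hi).mp h1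
  · rw [pathPt_eq W i (by omega)] at h2; exact h2
  · rw [pathPt_eq W i (by omega)] at h3; exact h3
  · exact (getD_true_iff W i hi).mpr h1
  · rw [pathPt_eq W i (by omega)]; exact h2
  · rw [pathPt_eq W i (by omega)]; exact h3

lemma rankWalk_tf (m n : ℤ) (B : List Bool) (r : ℤ) :
    rankWalk m n (true :: false :: B) r = r :: (r + m) :: rankWalk m n B (r + m + -n) := by
  simp [rankWalk]

lemma rankWalk_ft (m n : ℤ) (B : List Bool) (r : ℤ) :
    rankWalk m n (false :: true :: B) r = r :: (r + -n) :: rankWalk m n B (r + m + -n) := by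
  simp [rankWalk]
  rw [show r + -n + m = r + m + -n by ring]

lemma take_split (A L : List Bool) (i : ℕ) (h : A.length ≤ i) :
    (A ++ L).take i = A ++ L.take (i - A.length) := by
  rw [List.take_append, List.take_of_length_le h]

set_option maxHeartbeats 2000000 in
lemma core (m n : ℕ) (hm : 0 < m) (hn : 0 < n) (hcop : Nat.Coprime m n)
    (P' : List Bool) (hP' : IsPathWord m n P')
    (hmaxbig : ((m:ℤ) + n) ≤ (rankSet m n P').max' ⟨0, zero_mem_rankSet m n P' (by
      rw [hP'.1]; omega)⟩) :
    ∃ Q : List Bool, IsPathWord m n Q ∧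
      rankSet m n Q = rightOp m n (rankSet m n P') ∧
      area m n P' = area m n Q + 1 := by
  have hl : P'.length = m + n := hP'.1
  have hNpos : 0 < m + n := by omega
  have hne : (rankSet m n P').Nonempty := ⟨0, zero_mem_rankSet m n P' (by omega)⟩
  set M := (rankSet m n P').max' hne with hMdef
  have hMmem : M ∈ rankSet m n P' := Finset.max'_mem _ _
  rw [mem_rankSet_iff] at hMmem
  obtain ⟨j, hjlt, hje⟩ := hMmem
  have hMbig : ((m:ℤ) + n) ≤ M := hmaxbig
  have hj0 : j ≠ 0 := by
    rintro rfl
    simp [walkEnd] at hje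
    omega
  obtain ⟨k, rfl⟩ : ∃ k, j = k + 1 := ⟨j - 1, by omega⟩
  set A := P'.take k with hA
  set B := P'.drop (k+2) with hB
  have hAl : A.length = k := by rw [hA, List.length_take]; omega
  set b := A.count true with hb
  set ax := A.count false with hax
  set a := walkEnd (m:ℤ) n A 0 with ha
  have haeq : a = (m:ℤ) * b - n * ax := by rw [ha, walkEnd_eq]; ring
  have hamem : a ∈ rankSet m n P' := by
    rw [mem_rankSet_iff]; exact ⟨k, by omega, rfl⟩
  have haM : a ≤ M := Finset.le_max' _ _ hamem
  -- the letter at k is true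
  have htk1 : P'.take (k+1) = A ++ [P'[k]] := take_succ_getElem P' k (by omega)
  have hPk : P'[k] = true := by
    by_contra hc
    rw [Bool.not_eq_true] at hc
    rw [htk1, hc, walkEnd_append] at hje
    simp [walkEnd] at hje
    rw [← ha] at hje
    omega
  have hMa : M = a + m := by
    rw [htk1, hPk, walkEnd_append] at hje
    simp [walkEnd] at hje
    rw [← ha] at hje
    omega
  -- the letter at k+1 is false
  have htk2 : P'.take (k+2) = A ++ [P'[k]] ++ [P'[k+1]] := by
    rw [← htk1]; exact take_succ_getElem P' (k+1) (by omega)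
  have hvle : walkEnd (m:ℤ) n (P'.take (k+2)) 0 ≤ M := by
    rcases Nat.lt_or_ge (k+2) (m+n) with h2 | h2
    · exact Finset.le_max' _ _ (by rw [mem_rankSet_iff]; exact ⟨k+2, by omega, rfl⟩)
    · have : P'.take (k+2) = P' := List.take_of_length_le (by omega)
      rw [this, walkEnd_full m n P' hP']
      omega
  have hPk1 : P'[k+1] = false := by
    by_contra hc
    rw [Bool.not_eq_false] at hc
    rw [htk2, hPk, hc, walkEnd_append, walkEnd_append] at hvle
    simp [walkEnd] at hvle
    rw [← ha] at hvle
    omega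
  -- decomposition
  have hdecomp : P' = A ++ true :: false :: B := by
    have h1 : P'.drop k = true :: false :: B := by
      rw [List.drop_eq_getElem_cons (show k < P'.length by omega), hPk,
        List.drop_eq_getElem_cons (show k+1 < P'.length by omega), hPk1, ← hB]
    conv_lhs => rw [← List.take_append_drop k P', h1]
  set Q : List Bool := A ++ false :: true :: B with hQ
  have hQl : Q.length = m + n := by
    have h2 := congrArg List.length hdecomp
    rw [hl] at h2
    rw [hQ]
    simp at h2 ⊢
    omega
  -- counts of P' pieces
  have hcount := hP'.2
  have hcountT : b + 1 + B.count true = n := by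
    conv_rhs => rw [← hcount]
    conv_rhs => rw [hdecomp]
    simp [List.count_append, List.count_cons]
    omega
  have hcountFP' : P'.count false = m := by
    have := count_true_add_count_false P'
    omega
  have hcountF : ax + 1 + B.count false = m := by
    conv_rhs => rw [← hcountFP']
    conv_rhs => rw [hdecomp]
    simp [List.count_append, List.count_cons]
    omega
  have hQpath : IsPathWord m n Q := by
    refine ⟨hQl, ?_⟩
    rw [hQ]
    simp [List.count_append, List.count_cons]
    omega
  -- rank walks
  have hwalkP' : rankWalk (m:ℤ) n P' 0 =
      rankWalk (m:ℤ) n A 0 ++ a :: (a + m) :: rankWalk (m:ℤ) n B (a + m + -n) := by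
    conv_lhs => rw [hdecomp]
    rw [rankWalk_append, rankWalk_tf, ← ha]
  have hwalkQ : rankWalk (m:ℤ) n Q 0 =
      rankWalk (m:ℤ) n A 0 ++ a :: (a + -n) :: rankWalk (m:ℤ) n B (a + m + -n) := by
    rw [hQ, rankWalk_append, rankWalk_ft, ← ha]
  have hnodup := nodup_rankWalk m n hcop P' hl
  rw [hwalkP'] at hnodup
  obtain ⟨hn1, hn2, hdisj⟩ := List.nodup_append'.mp hnodup
  have hMnotinA : (a + (m:ℤ)) ∉ rankWalk (m:ℤ) n A 0 := fun hmem => hdisj hmem (by simp)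
  have hMnotinB : (a + (m:ℤ)) ∉ rankWalk (m:ℤ) n B (a + m + -n) := by
    have := (List.nodup_cons.mp hn2).2
    exact (List.nodup_cons.mp this).1
  have hMax0 : WithBot.unbotD 0 (rankSet m n P').max = a + m := by
    rw [unbot'_max _ hne, ← hMdef, hMa]
  clear_value B Q M
  refine ⟨Q, hQpath, ?_, ?_⟩
  · -- rank sets
    ext x
    rw [rightOp, hMax0]
    simp only [rankSet, Finset.mem_union, Finset.mem_erase, Finset.mem_singleton,
      List.mem_toFinset, hwalkP', hwalkQ, List.mem_append, List.mem_cons]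
    constructor
    · rintro (hx | (rfl | rfl | hx))
      · exact Or.inl ⟨fun h => hMnotinA (h ▸ hx), Or.inl hx⟩
      · exact Or.inl ⟨by omega, Or.inr (Or.inl rfl)⟩
      · exact Or.inr (by ring)
      · exact Or.inl ⟨fun h => hMnotinB (h ▸ hx), Or.inr (Or.inr (Or.inr hx))⟩
    · rintro (⟨hne', (hx | (rfl | rfl | hx))⟩ | rfl)
      · exact Or.inl hx
      · exact Or.inr (Or.inl rfl)
      · exact absurd rfl hne'
      · exact Or.inr (Or.inr (Or.inr hx))
      · refine Or.inr (Or.inr (Or.inl (by ring)))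
  · -- area
    have hPtkA : P'.take k = A := hA.symm
    have hQtkA : Q.take k = A := by
      rw [hQ, List.take_append_of_le_length (by omega)]
      exact List.take_of_length_le (by omega)
    have hPk1cnt : (P'.take (k+1)).count true = b + 1 ∧
        (P'.take (k+1)).count false = ax := by
      rw [htk1, hPk]
      constructor <;> simp [List.count_append, List.count_cons, hax, hb]
    have hPk2cnt : (P'.take (k+2)).count true = b + 1 ∧
        (P'.take (k+2)).count false = ax + 1 := by
      rw [htk2, hPk, hPk1]
      constructor <;> simp [List.count_append, List.count_cons, hax, hb]
    have hQk1 : Q.take (k+1) = A ++ [false] := by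
      rw [hQ, take_split _ _ _ (by omega)]
      have h1 : k + 1 - A.length = 1 := by omega
      rw [h1]
      rfl
    have hQk1cnt : (Q.take (k+1)).count true = b ∧
        (Q.take (k+1)).count false = ax + 1 := by
      rw [hQk1]
      constructor <;> simp [List.count_append, List.count_cons, hax, hb]
    have hctQP : ∀ i, i ≠ k + 1 →
        (Q.take i).count true = (P'.take i).count true ∧
        (Q.take i).count false = (P'.take i).count false := by
      intro i hik
      rcases Nat.lt_or_ge i (k+1) with h1 | h1
      · have hQi : Q.take i = P'.take i := by
          rw [hQ, List.take_append_of_le_length (by omega), hA, List.take_take,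
            min_eq_left (by omega)]
        rw [hQi]
        exact ⟨rfl, rfl⟩
      · have h2 : k + 2 ≤ i := by omega
        obtain ⟨s, hs⟩ : ∃ s, i - A.length = s + 2 := ⟨i - A.length - 2, by omega⟩
        have hsplitQ : Q.take i = A ++ false :: true :: B.take s := by
          rw [hQ, take_split _ _ _ (by omega), hs]
          rfl
        have hsplitP : P'.take i = A ++ true :: false :: B.take s := by
          conv_lhs => rw [hdecomp]
          rw [take_split _ _ _ (by omega), hs]
          rfl
        rw [hsplitQ, hsplitP]
        constructor <;> simp [List.count_append, List.count_cons] <;> omega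
    have hctQk2 : (Q.take (k+2)).count true = b + 1 ∧
        (Q.take (k+2)).count false = ax + 1 := by
      have := hctQP (k+2) (by omega)
      omega
    -- numeric facts
    have hdiag : (n:ℤ) * ((ax:ℤ) + 1) ≤ (m:ℤ) * (b:ℤ) := by
      have e : (n:ℤ)*((ax:ℤ)+1) = (n:ℤ)*(ax:ℤ) + n := by ring
      rw [hMa] at hMbig
      rw [e]
      linarith [haeq, hMbig]
    have hbn : b + 1 ≤ n := by omega
    have haxm : ax + 1 ≤ m := by omega
    -- claim (i)
    have claimI : ∀ x y : ℤ,
        (∃ i < Q.length, (Q.take (i+1)).count true = (Q.take i).count true + 1 ∧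
          ((Q.take i).count true : ℤ) = y ∧ ((Q.take i).count false : ℤ) ≤ x) →
        (∃ i < P'.length, (P'.take (i+1)).count true = (P'.take i).count true + 1 ∧
          ((P'.take i).count true : ℤ) = y ∧ ((P'.take i).count false : ℤ) ≤ x) := by
      rintro x y ⟨i, hi, hinc, hy, hx⟩
      by_cases hik : i = k
      · subst hik
        rw [hQk1cnt.1, hQtkA] at hinc
        omega
      · by_cases hik1 : i = k + 1
        · subst hik1
          refine ⟨k, by omega, ?_, ?_, ?_⟩
          · rw [hPk1cnt.1, hPtkA]
          · rw [hPtkA]; rw [hQk1cnt.1] at hy; exact hy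
          · rw [hPtkA]; rw [hQk1cnt.2] at hx; push_cast at hx ⊢; omega
        · refine ⟨i, by omega, ?_, ?_, ?_⟩
          · rw [← (hctQP i hik1).1, ← (hctQP (i+1) (by omega)).1]; exact hinc
          · rw [← (hctQP i hik1).1]; exact hy
          · rw [← (hctQP i hik1).2]; exact hx
    -- claim (ii)
    have claimII : ∀ x y : ℤ,
        (∃ i < P'.length, (P'.take (i+1)).count true = (P'.take i).count true + 1 ∧
          ((P'.take i).count true : ℤ) = y ∧ ((P'.take i).count false : ℤ) ≤ x) →
        (∃ i < Q.length, (Q.take (i+1)).count true = (Q.take i).count true + 1 ∧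
          ((Q.take i).count true : ℤ) = y ∧ ((Q.take i).count false : ℤ) ≤ x) ∨
        (y = (b:ℤ) ∧ x = (ax:ℤ)) := by
      rintro x y ⟨i, hi, hinc, hy, hx⟩
      by_cases hik : i = k
      · subst hik
        rw [hPtkA] at hy hx
        rcases lt_or_ge x ((ax:ℤ) + 1) with h1 | h1
        · exact Or.inr ⟨hy.symm, by omega⟩
        · refine Or.inl ⟨i+1, by omega, ?_, ?_, ?_⟩
          · show (Q.take (i+2)).count true = (Q.take (i+1)).count true + 1
            rw [hctQk2.1, hQk1cnt.1]
          · rw [hQk1cnt.1]; exact hy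
          · rw [hQk1cnt.2]; push_cast; omega
      · by_cases hik1 : i = k + 1
        · subst hik1
          rw [hPk2cnt.1, hPk1cnt.1] at hinc
          omega
        · refine Or.inl ⟨i, by omega, ?_, ?_, ?_⟩
          · rw [(hctQP i hik1).1, (hctQP (i+1) (by omega)).1]; exact hinc
          · rw [(hctQP i hik1).1]; exact hy
          · rw [(hctQP i hik1).2]; exact hx
    -- claim (iii)
    have claimIII : ¬ (∃ i < Q.length,
        (Q.take (i+1)).count true = (Q.take i).count true + 1 ∧
        ((Q.take i).count true : ℤ) = (b:ℤ) ∧ ((Q.take i).count false : ℤ) ≤ (ax:ℤ)) := by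
      rintro ⟨i, hi, hinc, hy, hx⟩
      by_cases hik : i = k
      · subst hik
        rw [hQk1cnt.1, hQtkA] at hinc
        omega
      · by_cases hik1 : i = k + 1
        · subst hik1
          rw [hQk1cnt.2] at hx
          push_cast at hx
          omega
        · have h1 := (hctQP i hik1).1
          have h2 := (hctQP (i+1) (by omega)).1
          rw [h1] at hy hinc
          rw [h2] at hinc
          have hyb : (P'.take i).count true = b := by exact_mod_cast hy
          rcases Nat.lt_or_ge i k with hlt | hge
          · have := ct_mono P' true (show i + 1 ≤ k by omega)
            rw [hPtkA] at this
            omega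
          · have hge2 : k + 2 ≤ i := by omega
            have := ct_mono P' true hge2
            rw [hPk2cnt.1] at this
            omega
    -- claim (iv)
    have claimIV : ∃ i < P'.length,
        (P'.take (i+1)).count true = (P'.take i).count true + 1 ∧
        ((P'.take i).count true : ℤ) = (b:ℤ) ∧ ((P'.take i).count false : ℤ) ≤ (ax:ℤ) := by
      refine ⟨k, by omega, ?_, ?_, ?_⟩
      · rw [hPk1cnt.1, hPtkA]
      · rw [hPtkA]
      · rw [hPtkA]
    -- the filter sets
    classical
    have hset : ((Finset.range m ×ˢ Finset.range n).filter (fun q =>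
          (n : ℤ) * (q.1 + 1) ≤ (m : ℤ) * q.2 ∧
          ∃ i < P'.length, P'.getD i false = true ∧
            (pathPt P' i).2 = (q.2 : ℤ) ∧ (pathPt P' i).1 ≤ (q.1 : ℤ))) =
        insert ((ax, b) : ℕ × ℕ) ((Finset.range m ×ˢ Finset.range n).filter (fun q =>
          (n : ℤ) * (q.1 + 1) ≤ (m : ℤ) * q.2 ∧
          ∃ i < Q.length, Q.getD i false = true ∧
            (pathPt Q i).2 = (q.2 : ℤ) ∧ (pathPt Q i).1 ≤ (q.1 : ℤ))) := by
      ext q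
      simp only [Finset.mem_filter, Finset.mem_insert, Finset.mem_product, Finset.mem_range]
      constructor
      · rintro ⟨⟨hq1, hq2⟩, hd, hnc⟩
        rw [NC_iff] at hnc
        rcases claimII _ _ hnc with h | ⟨hyb, hxa⟩
        · exact Or.inr ⟨⟨hq1, hq2⟩, hd, (NC_iff Q _ _).mpr h⟩
        · left
          have e1 : q.2 = b := by exact_mod_cast hyb
          have e2 : q.1 = ax := by exact_mod_cast hxa
          exact Prod.ext e2 e1
      · rintro (rfl | ⟨⟨hq1, hq2⟩, hd, hnc⟩)
        · refine ⟨⟨by omega, by omega⟩, by push_cast; push_cast at hdiag; omega, ?_⟩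
          rw [NC_iff]
          exact claimIV
        · refine ⟨⟨hq1, hq2⟩, hd, ?_⟩
          rw [NC_iff] at hnc ⊢
          exact claimI _ _ hnc
    have hnotmem : ((ax, b) : ℕ × ℕ) ∉ ((Finset.range m ×ˢ Finset.range n).filter (fun q =>
          (n : ℤ) * (q.1 + 1) ≤ (m : ℤ) * q.2 ∧
          ∃ i < Q.length, Q.getD i false = true ∧
            (pathPt Q i).2 = (q.2 : ℤ) ∧ (pathPt Q i).1 ≤ (q.1 : ℤ))) := by
      intro hmem
      rw [Finset.mem_filter] at hmem
      obtain ⟨-, -, hnc⟩ := hmem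
      rw [NC_iff] at hnc
      exact claimIII hnc
    rw [area, area]
    have harea := congrArg Finset.card hset
    rw [Finset.card_insert_of_notMem hnotmem] at harea
    convert harea using 2

lemma base_compl (m n : ℕ) (h : 0 < m + n) :
    rankCompl (baseRankSet m n) = baseRankSet m n := by
  have h0 : (0:ℤ) ∈ baseRankSet m n := by
    rw [baseRankSet, Finset.mem_image]
    exact ⟨0, Finset.mem_range.mpr h, rfl⟩
  have hne : (baseRankSet m n).Nonempty := ⟨0, h0⟩
  have hmax : (baseRankSet m n).max' hne = ((m+n-1 : ℕ) : ℤ) := by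
    apply le_antisymm
    · apply Finset.max'_le
      intro y hy
      rw [baseRankSet, Finset.mem_image] at hy
      obtain ⟨i, hi, rfl⟩ := hy
      rw [Finset.mem_range] at hi
      omega
    · apply Finset.le_max'
      rw [baseRankSet, Finset.mem_image]
      exact ⟨m+n-1, Finset.mem_range.mpr (by omega), rfl⟩
  rw [rankCompl_eq _ hne, hmax]
  ext x
  simp only [baseRankSet, Finset.image_image, Finset.mem_image, Finset.mem_range,
    Function.comp]
  constructor
  · rintro ⟨i, hi, rfl⟩
    exact ⟨m+n-1-i, by omega, by omega⟩
  · rintro ⟨i, hi, rfl⟩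
    exact ⟨m+n-1-i, by omega, by omega⟩

lemma max'_ge_of_ne_base (m n : ℕ) (hm : 0 < m) (hn : 0 < n) (hcop : Nat.Coprime m n)
    (P : List Bool) (hD : IsDyckWord m n P) (hne : rankSet m n P ≠ baseRankSet m n) :
    ((m:ℤ) + n) ≤ (rankSet m n P).max' ⟨0, zero_mem_rankSet m n P (by rw [hD.1.1]; omega)⟩ := by
  by_contra hc
  push_neg at hc
  apply hne
  apply Finset.eq_of_subset_of_card_le
  · intro r hr
    have h1 := rankSet_nonneg m n P hD r hr
    have h2 : r ≤ (rankSet m n P).max' _ := Finset.le_max' _ r hr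
    rw [baseRankSet, Finset.mem_image]
    exact ⟨r.toNat, Finset.mem_range.mpr (by omega), by omega⟩
  · calc (baseRankSet m n).card ≤ (Finset.range (m+n)).card := Finset.card_image_le
    _ = m + n := Finset.card_range _
    _ = (rankSet m n P).card := (card_rankSet m n hcop P hD.1.1).symm

/-- For the rank set `R ≠ R₀` of an `(m,n)`-Dyck path, we have
`ℒ(R) = 𝔠(ℛ(𝔠(R)))`, and consequently `area(𝔠(ℒ(R))) = area(𝔠(R)) - 1`, a rank set
being identified with its `(m,n)`-Dyck path for the purpose of taking area. -/
theorem leftOp_eq_compl_rightOp_compl (m n : ℕ) (hm : 0 < m) (hn : 0 < n)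
    (hcop : Nat.Coprime m n) (R : Finset ℤ) (hR : IsDyckRankSet m n R)
    (hne : R ≠ baseRankSet m n) :
    leftOp m n R = rankCompl (rightOp m n (rankCompl R)) ∧
    ∀ P P' : List Bool, IsDyckWord m n P → IsDyckWord m n P' →
      rankSet m n P = rankCompl (leftOp m n R) → rankSet m n P' = rankCompl R →
      area m n P' = area m n P + 1 := by
  obtain ⟨P₀, hP₀D, hP₀R⟩ := hR
  subst hP₀R
  set R := rankSet m n P₀ with hP₀R
  have hlen₀ : P₀.length = m + n := hP₀D.1.1
  have h0 : (0:ℤ) ∈ R := by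
    rw [hP₀R]; exact zero_mem_rankSet m n P₀ (by omega)
  have hnonneg : ∀ r ∈ R, 0 ≤ r := by
    rw [hP₀R]; exact rankSet_nonneg m n P₀ hP₀D
  have hmmem : (m:ℤ) ∈ R := by
    rw [hP₀R]; exact m_mem_rankSet m n hm hn P₀ hP₀D
  have hRne : R.Nonempty := ⟨0, h0⟩
  set M := R.max' hRne with hMdef
  have hMmem : M ∈ R := Finset.max'_mem _ _
  have hMN : ((m:ℤ) + n) ≤ M := by
    exact max'_ge_of_ne_base m n hm hn hcop P₀ hP₀D hne
  have hpart1 := part1_sets m n hm hn R h0 hnonneg hmmem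
  refine ⟨hpart1, ?_⟩
  intro P P' hPD hP'D hPrank hP'rank
  -- facts about rankCompl R
  have hS : rankCompl R = R.image (fun r => M - r) := rankCompl_eq R hRne
  have hSne : (rankCompl R).Nonempty := by rw [hS]; exact hRne.image _
  have hSmax : WithBot.unbotD 0 (rankCompl R).max = M :=
    (unbot'_max _ hSne).trans (max'_rankCompl R h0 hnonneg hSne)
  have hS0 : (0:ℤ) ∈ rankCompl R := by
    rw [hS, Finset.mem_image]
    exact ⟨M, hMmem, by ring⟩
  -- rankSet P' is not the base rank set
  have hP'ne : rankSet m n P' ≠ baseRankSet m n := by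
    rw [hP'rank]
    intro hcontra
    apply hne
    have := rankCompl_rankCompl R h0 hnonneg
    rw [hcontra] at this
    rw [← this, base_compl m n (by omega)]
  -- apply the core lemma to P'
  obtain ⟨Q, hQpath, hQset, hQarea⟩ := core m n hm hn hcop P' hP'D.1
    (max'_ge_of_ne_base m n hm hn hcop P' hP'D hP'ne)
  -- rankSet P equals rankSet Q
  have hX0 : (0:ℤ) ∈ rightOp m n (rankCompl R) := by
    rw [rightOp, hSmax]
    apply Finset.mem_union_left
    rw [Finset.mem_erase]
    exact ⟨by omega, hS0⟩
  have hXnn : ∀ x ∈ rightOp m n (rankCompl R), 0 ≤ x := by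
    intro x hx
    rw [rightOp, hSmax, Finset.mem_union, Finset.mem_erase, Finset.mem_singleton] at hx
    rcases hx with ⟨-, hx⟩ | rfl
    · rw [hS, Finset.mem_image] at hx
      obtain ⟨r, hr, rfl⟩ := hx
      have := Finset.le_max' R r hr
      omega
    · omega
  have hPQ : rankSet m n P = rankSet m n Q := by
    rw [hPrank, hQset, hP'rank, hpart1,
      rankCompl_rankCompl (rightOp m n (rankCompl R)) hX0 hXnn]
  have : P = Q := word_eq_of_rankSet_eq m n hcop P Q hPD.1 hQpath hPQ
  rw [this]
  exact hQarea
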